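/- arXiv:1008.1292 — 5 statements merged into one kernel-verified Lean document; each statement's English description precedes it below -/
import Mathlib

section
/- If {K_j}_{j=1..m} are d×d complex matrices with ∑_j K_j† K_j ≤ I and ∑_j |det K_j|^(2/d) = 1, then every K_j is a scalar multiple of a unitary matrix (i.e., K_j† K_j = c_j I with c_j ≥ 0), and ∑_j c_j = 1. -/
open Matrix ComplexOrder

/-- AM-GM for `d` nonnegative reals. -/
lemma amgm_le_aux {d : ℕ} (hd : 0 < d) (z : Fin d → ℝ) (hz : ∀ i, 0 ≤ z i) :
    (∏ i, z i) ^ ((d : ℝ)⁻¹) ≤ (∑ i, z i) / d := by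
  have hd' : (d : ℝ) ≠ 0 := Nat.cast_ne_zero.mpr hd.ne'
  have h := Real.geom_mean_le_arith_mean_weighted Finset.univ (fun _ => (d : ℝ)⁻¹) z
    (fun i _ => by positivity) (by simp [Finset.sum_const, mul_comm, hd']) (fun i _ => hz i)
  rwa [Real.finset_prod_rpow Finset.univ z (fun i _ => hz i) _, ← Finset.mul_sum,
    inv_mul_eq_div] at h

/-- Equality case of AM-GM. -/
lemma amgm_eq_aux {d : ℕ} (hd : 0 < d) (z : Fin d → ℝ) (hz : ∀ i, 0 ≤ z i) {c : ℝ}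
    (hc : c = (∑ i, z i) / d) (h : (∏ i, z i) ^ ((d : ℝ)⁻¹) = c) : ∀ i, z i = c := by
  have hd' : (d : ℝ) ≠ 0 := Nat.cast_ne_zero.mpr hd.ne'
  have hsum : ∑ i, z i = c * d := by
    field_simp at hc
    linarith
  have hc0 : 0 ≤ c := by
    rw [hc]
    exact div_nonneg (Finset.sum_nonneg fun i _ => hz i) (Nat.cast_nonneg d)
  rcases hc0.eq_or_lt with hc0' | hcpos
  · intro i
    rw [← hc0'] at hsum ⊢
    rw [zero_mul] at hsum
    exact (Finset.sum_eq_zero_iff_of_nonneg (fun i _ => hz i)).mp hsum i (Finset.mem_univ i)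
  · have hprod : ∏ i, z i = c ^ d := by
      have := congrArg (fun x : ℝ => x ^ d) h
      simpa [Real.rpow_inv_natCast_pow (Finset.prod_nonneg fun i _ => hz i) hd.ne'] using this
    have hzpos : ∀ i, 0 < z i := by
      intro i
      rcases (hz i).eq_or_lt with h0 | h; swap
      · exact h
      · exfalso
        have : ∏ i, z i = 0 := Finset.prod_eq_zero (Finset.mem_univ i) h0.symm
        rw [hprod] at this
        exact (pow_pos hcpos d).ne' this
    have hlog : ∑ i, Real.log (z i / c) = 0 := by
      rw [← Real.log_prod (fun i _ => (div_pos (hzpos i) hcpos).ne')]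
      rw [Finset.prod_div_distrib, Finset.prod_const, Finset.card_univ, Fintype.card_fin,
        hprod, div_self (pow_pos hcpos d).ne']
      exact Real.log_one
    have hsum' : ∑ i, z i / c = d := by
      rw [← Finset.sum_div, hsum, mul_comm, mul_div_assoc, div_self hcpos.ne', mul_one]
    have hkey : ∑ i, (z i / c - 1 - Real.log (z i / c)) = 0 := by
      rw [Finset.sum_sub_distrib, Finset.sum_sub_distrib, hlog, hsum']
      simp [Finset.card_univ]
    intro i
    have hterm : ∀ i ∈ Finset.univ, (0 : ℝ) ≤ z i / c - 1 - Real.log (z i / c) := by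
      intro i _
      have := Real.log_le_sub_one_of_pos (div_pos (hzpos i) hcpos)
      linarith
    have hzero := (Finset.sum_eq_zero_iff_of_nonneg hterm).mp hkey i (Finset.mem_univ i)
    by_contra hne
    have hne' : z i / c ≠ 1 := by
      intro h1
      exact hne (by field_simp at h1; linarith)
    have := Real.log_lt_sub_one_of_pos (div_pos (hzpos i) hcpos) hne'
    linarith

/-- A hermitian matrix whose eigenvalues are all `c` equals `c • 1`. -/
lemma eq_smul_one_of_eigenvalues_const {d : ℕ} {A : Matrix (Fin d) (Fin d) ℂ}
    (hA : A.IsHermitian) {c : ℝ} (h : ∀ i, hA.eigenvalues i = c) :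
    A = (c : ℂ) • (1 : Matrix (Fin d) (Fin d) ℂ) := by
  have hdiag : Matrix.diagonal (RCLike.ofReal ∘ hA.eigenvalues) =
      (c : ℂ) • (1 : Matrix (Fin d) (Fin d) ℂ) := by
    ext i k
    by_cases hik : i = k <;>
      simp [Matrix.diagonal_apply, Matrix.one_apply, hik, h i, h k]
  calc A = (hA.eigenvectorUnitary : Matrix (Fin d) (Fin d) ℂ) *
        Matrix.diagonal (RCLike.ofReal ∘ hA.eigenvalues) *
        (star hA.eigenvectorUnitary : Matrix (Fin d) (Fin d) ℂ) := hA.spectral_theorem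
    _ = (c : ℂ) • ((hA.eigenvectorUnitary : Matrix (Fin d) (Fin d) ℂ) *
        (star hA.eigenvectorUnitary : Matrix (Fin d) (Fin d) ℂ)) := by
        rw [hdiag, Matrix.mul_smul, Matrix.smul_mul, mul_one]
    _ = (c : ℂ) • (1 : Matrix (Fin d) (Fin d) ℂ) := by
        rw [Matrix.mem_unitaryGroup_iff.mp hA.eigenvectorUnitary.2]

/-- Trace of a hermitian matrix is the sum of its eigenvalues. -/
lemma trace_eq_sum_eigenvalues_aux {d : ℕ} {A : Matrix (Fin d) (Fin d) ℂ}
    (hA : A.IsHermitian) : A.trace = ((∑ i, hA.eigenvalues i : ℝ) : ℂ) := by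
  conv_lhs => rw [hA.spectral_theorem]
  rw [Unitary.conjStarAlgAut_apply, Matrix.trace_mul_cycle,
    Matrix.mem_unitaryGroup_iff'.mp hA.eigenvectorUnitary.2, Matrix.one_mul,
    Matrix.trace_diagonal]
  push_cast
  rfl

/-- Equality case: if `∑ j, K jᴴ * K j ≤ I` and `∑ j |det (K j)|^(2/d) = 1`, then each
`K j` is a nonnegative scalar multiple of a unitary (`K jᴴ * K j = c j • I`, `c j ≥ 0`)
and `∑ j, c j = 1`. -/
theorem sum_abs_det_rpow_eq_one {d m : ℕ} (hd : 1 ≤ d)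
    (K : Fin m → Matrix (Fin d) (Fin d) ℂ)
    (hK : ((1 : Matrix (Fin d) (Fin d) ℂ) - ∑ j, (K j)ᴴ * K j).PosSemidef)
    (heq : ∑ j, ‖(K j).det‖ ^ ((2 : ℝ) / d) = 1) :
    ∃ c : Fin m → ℝ, (∀ j, 0 ≤ c j ∧
      (K j)ᴴ * K j = ((c j : ℂ)) • (1 : Matrix (Fin d) (Fin d) ℂ)) ∧ ∑ j, c j = 1 := by
  have hd0 : 0 < d := hd
  have hd' : (d : ℝ) ≠ 0 := Nat.cast_ne_zero.mpr hd0.ne'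
  set c : Fin m → ℝ := fun j => ‖(K j).det‖ ^ ((2 : ℝ) / d) with hcdef
  have hApsd : ∀ j, ((K j)ᴴ * K j).PosSemidef := fun j =>
    posSemidef_conjTranspose_mul_self (K j)
  set lam : Fin m → Fin d → ℝ := fun j => (hApsd j).1.eigenvalues with hlamdef
  have hlam0 : ∀ j i, 0 ≤ lam j i := fun j i => (hApsd j).eigenvalues_nonneg i
  -- |det K j|^2 = ∏ eigenvalues
  have hdet : ∀ j, ‖(K j).det‖ ^ 2 = ∏ i, lam j i := by
    intro j
    have h1 : ((K j)ᴴ * K j).det = ((‖(K j).det‖ ^ 2 : ℝ) : ℂ) := by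
      rw [Matrix.det_mul, Matrix.det_conjTranspose]
      rw [mul_comm]
      rw [show (star (K j).det) = starRingEnd ℂ (K j).det from rfl]
      rw [Complex.mul_conj, Complex.normSq_eq_norm_sq]
    have h2 : ((K j)ᴴ * K j).det = ((∏ i, lam j i : ℝ) : ℂ) := by
      rw [(hApsd j).1.det_eq_prod_eigenvalues]
      push_cast
      rfl
    have := h1.symm.trans h2
    exact_mod_cast this
  -- c j = (∏ lam j i) ^ (1/d)
  have hc_prod : ∀ j, c j = (∏ i, lam j i) ^ ((d : ℝ)⁻¹) := by
    intro j
    have habs : (0 : ℝ) ≤ ‖(K j).det‖ := norm_nonneg _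
    show ‖(K j).det‖ ^ ((2 : ℝ) / d) = _
    rw [show (2 : ℝ) / d = ((2 : ℕ) : ℝ) * (d : ℝ)⁻¹ by push_cast; ring,
      Real.rpow_natCast_mul habs 2 _, hdet j]
  -- AM-GM per j
  have hamgm : ∀ j, c j ≤ (∑ i, lam j i) / d := by
    intro j
    rw [hc_prod j]
    exact amgm_le_aux hd0 (lam j) (hlam0 j)
  -- Trace bound : ∑ j ∑ i lam j i ≤ d
  have htrace : ∑ j, ((∑ i, lam j i) / d) ≤ 1 := by
    have h1 : (0 : ℝ) ≤ Complex.re ((1 - ∑ j, (K j)ᴴ * K j).trace) := by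
      have : ∀ i : Fin d, (0 : ℝ) ≤
          Complex.re ((1 - ∑ j, (K j)ᴴ * K j) i i) := by
        intro i
        have := hK.re_dotProduct_nonneg (Pi.single i 1)
        simpa [dotProduct, Matrix.mulVec, Pi.single_apply, Finset.sum_ite_eq,
          dotProduct_single, single_dotProduct] using this
      calc (0 : ℝ) ≤ ∑ i, Complex.re ((1 - ∑ j, (K j)ᴴ * K j) i i) :=
            Finset.sum_nonneg fun i _ => this i
        _ = Complex.re ((1 - ∑ j, (K j)ᴴ * K j).trace) := by
            rw [Matrix.trace, Complex.re_sum]; rfl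
    have h2 : ((1 : Matrix (Fin d) (Fin d) ℂ) - ∑ j, (K j)ᴴ * K j).trace =
        ((d : ℝ) - ∑ j, ∑ i, lam j i : ℝ) := by
      rw [Matrix.trace_sub, Matrix.trace_one, Matrix.trace_sum]
      have : ∀ j, ((K j)ᴴ * K j).trace = ((∑ i, lam j i : ℝ) : ℂ) := fun j =>
        trace_eq_sum_eigenvalues_aux (hApsd j).1
      rw [Finset.sum_congr rfl fun j _ => this j]
      push_cast
      simp [Finset.card_univ]
    rw [h2] at h1
    simp only [Complex.ofReal_re] at h1
    rw [← Finset.sum_div, div_le_one (by positivity)]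
    linarith
  -- Forcing equality
  have hsum_eq : ∑ j, ((∑ i, lam j i) / d) = 1 :=
    le_antisymm htrace (heq ▸ Finset.sum_le_sum fun j _ => hamgm j)
  have hpointwise : ∀ j, c j = (∑ i, lam j i) / d := by
    have := (Finset.sum_eq_sum_iff_of_le (fun j _ => hamgm j)).mp
      (by rw [hsum_eq]; exact heq)
    exact fun j => this j (Finset.mem_univ j)
  refine ⟨c, fun j => ⟨Real.rpow_nonneg (norm_nonneg _) _, ?_⟩, heq⟩
  have hlams : ∀ i, lam j i = c j := by
    intro i
    exact amgm_eq_aux hd0 (lam j) (hlam0 j) (hpointwise j) (hc_prod j).symm i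
  exact eq_smul_one_of_eigenvalues_const (hApsd j).1 hlams
end

section
/- Let E be a function from vectors in ℂ^{d₁} ⊗ H (H a finite-dimensional Hilbert space) to nonnegative reals that is invariant under g ⊗ I for all g ∈ SL(d₁, ℂ) and homogeneous of degree 2 (E(c·v) = |c|²·E(v) for c ∈ ℂ). If v ∈ ℂ^{d₁} ⊗ H lies in V ⊗ H for some proper subspace V ⊊ ℂ^{d₁}, then E(v) = 0. -/
open Matrix TensorProduct

/-- If `E` on `ℂ^{d₁} ⊗ H` is `SL(d₁,ℂ) ⊗ I`-invariant and homogeneous of degree 2,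
then `E` vanishes on any vector lying in `V ⊗ H` for a proper subspace `V ⊊ ℂ^{d₁}`. -/
theorem E_eq_zero_of_mem_proper_subspace_tensor {d₁ : ℕ}
    {H : Type*} [NormedAddCommGroup H] [InnerProductSpace ℂ H] [FiniteDimensional ℂ H]
    (E : TensorProduct ℂ (Fin d₁ → ℂ) H → ℝ) (hEnn : ∀ v, 0 ≤ E v)
    (hinv : ∀ (g : Matrix (Fin d₁) (Fin d₁) ℂ), g.det = 1 →
      ∀ v, E (TensorProduct.map (Matrix.toLin' g) (LinearMap.id : H →ₗ[ℂ] H) v) = E v)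
    (hhom : ∀ (c : ℂ) (v), E (c • v) = ‖c‖ ^ 2 * E v)
    (V : Submodule ℂ (Fin d₁ → ℂ)) (hV : V ≠ ⊤)
    (v : TensorProduct ℂ (Fin d₁ → ℂ) H)
    (hv : v ∈ LinearMap.range
      (TensorProduct.map V.subtype (LinearMap.id : H →ₗ[ℂ] H))) :
    E v = 0 := by
  obtain ⟨w, hw⟩ := hv
  -- a nonzero functional vanishing on V
  obtain ⟨f, hf0, hfV⟩ := V.exists_dual_map_eq_bot_of_lt_top (lt_top_iff_ne_top.mpr hV)
    inferInstance
  have hfV' : ∀ y ∈ V, f y = 0 := by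
    intro y hy
    have : f y ∈ V.map f := ⟨y, hy, rfl⟩
    rwa [hfV, Submodule.mem_bot] at this
  obtain ⟨x, hx⟩ : ∃ x, f x ≠ 0 := by
    by_contra h
    push_neg at h
    exact hf0 (LinearMap.ext fun x => h x)
  set u : Fin d₁ → ℂ := (f x)⁻¹ • x with hu
  have hfu : f u = 1 := by
    simp [hu, inv_mul_cancel₀ hx]
  -- the coefficient vector of f
  set c : Fin d₁ → ℂ := fun j => f (Pi.single j 1) with hc
  have hfc : ∀ y, c ⬝ᵥ y = f y := by
    intro y
    rw [LinearMap.pi_apply_eq_sum_univ f y]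
    simp only [dotProduct, hc, smul_eq_mul]
    refine Finset.sum_congr rfl fun j _ => ?_
    rw [mul_comm]
    congr 1
    congr 1
    ext i
    simp [Pi.single_apply, eq_comm]
  set s : ℂ := (2:ℂ) ^ (1 - (d₁:ℤ)) with hs
  set M : Matrix (Fin d₁) (Fin d₁) ℂ :=
    (2:ℂ) • (1 + Matrix.replicateCol Unit (((s - 2)/2) • u) * Matrix.replicateRow Unit c) with hM
  have hdet : M.det = 1 := by
    rw [hM, Matrix.det_smul, Matrix.det_one_add_replicateCol_mul_replicateRow]
    have : c ⬝ᵥ (((s - 2)/2) • u) = (s - 2)/2 := by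
      rw [dotProduct_smul, hfc, hfu, smul_eq_mul, mul_one]
    rw [this]
    have h2 : (1 : ℂ) + (s - 2)/2 = s / 2 := by ring
    rw [h2, hs]
    rw [Fintype.card_fin]
    rw [show ((2:ℂ)^d₁) = (2:ℂ) ^ (d₁ : ℤ) from (zpow_natCast _ _).symm,
      div_eq_mul_inv, show ((2:ℂ)⁻¹) = (2:ℂ)^(-1:ℤ) from (_root_.zpow_neg_one _).symm,
      ← zpow_add₀ (two_ne_zero), ← zpow_add₀ (two_ne_zero),
      show (d₁:ℤ) + (1 - ↑d₁ + -1) = 0 by ring, zpow_zero]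
  -- M acts on V as multiplication by 2
  have hMV : (Matrix.toLin' M) ∘ₗ V.subtype = (2:ℂ) • V.subtype := by
    ext y
    simp only [LinearMap.comp_apply, Matrix.toLin'_apply, LinearMap.smul_apply,
      Submodule.coe_subtype]
    rw [hM]
    have h1 : Matrix.mulVec ((2:ℂ) • (1 + Matrix.replicateCol Unit (((s - 2)/2) • u) * Matrix.replicateRow Unit c))
        (y : Fin d₁ → ℂ) = (2:ℂ) • Matrix.mulVec (1 + Matrix.replicateCol Unit (((s - 2)/2) • u) *
        Matrix.replicateRow Unit c) (y : Fin d₁ → ℂ) := by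
      rw [Matrix.smul_mulVec]
    rw [h1, Matrix.add_mulVec, Matrix.one_mulVec]
    have h2 : (Matrix.replicateCol Unit (((s - 2)/2) • u) * Matrix.replicateRow Unit c).mulVec
        (y : Fin d₁ → ℂ) = 0 := by
      ext i
      simp only [Matrix.mulVec, dotProduct, Matrix.mul_apply, Matrix.replicateCol_apply,
        Matrix.replicateRow_apply, Pi.zero_apply, Finset.sum_const, Finset.card_univ,
        Fintype.card_unit, one_smul, Pi.smul_apply, smul_eq_mul]
      have h3 : ∀ j, ((s - 2)/2 * u i * c j) * (y : Fin d₁ → ℂ) j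
          = ((s - 2)/2 * u i) * (c j * (y : Fin d₁ → ℂ) j) := fun j => by ring
      rw [Finset.sum_congr rfl fun j _ => h3 j, ← Finset.mul_sum]
      have h4 : ∑ j, c j * (y : Fin d₁ → ℂ) j = f y := hfc y
      rw [h4, hfV' y y.2, mul_zero]
    rw [h2, add_zero]
  -- hence M ⊗ I sends v to 2 • v
  have hMv : TensorProduct.map (Matrix.toLin' M) (LinearMap.id : H →ₗ[ℂ] H) v = (2:ℂ) • v := by
    rw [← hw, ← LinearMap.comp_apply, ← TensorProduct.map_comp, hMV,
      LinearMap.id_comp, TensorProduct.map_smul_left]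
    rfl
  have h1 := hinv M hdet v
  rw [hMv, hhom] at h1
  have : ‖(2:ℂ)‖ = 2 := by
    simp
  rw [this] at h1
  nlinarith [hEnn v]
end

section
/- Let E be a convex nonnegative function on density matrices on ℂ^d ⊗ H that on pure states satisfies E(|ψ⟩⟨ψ|) invariant under (g⊗I) for g ∈ SL(d,ℂ) (up to normalization) and is homogeneous of degree 1 on unnormalized positive rank-one matrices. Suppose a channel $ has Kraus operators {K_j} on ℂ^d with ∑_j K_j†K_j = I, all with nonzero determinant. Then for any pure state ψ, E(($ ⊗ I)(|ψ⟩⟨ψ|)) ≤ (∑_j |det K_j|^(2/d)) · E(|ψ⟩⟨ψ|). -/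
open Matrix Kronecker ComplexOrder

private lemma vmv_conj {n : Type*} [Fintype n] (M : Matrix n n ℂ) (x : n → ℂ) :
    M * Matrix.vecMulVec x (star x) * Mᴴ =
      Matrix.vecMulVec (M *ᵥ x) (star (M *ᵥ x)) := by
  rw [vecMulVec_eq Unit, vecMulVec_eq Unit, ← conjTranspose_replicateCol, ← conjTranspose_replicateCol,
    replicateCol_mulVec, conjTranspose_mul, Matrix.mul_assoc, Matrix.mul_assoc]
  exact (Matrix.mul_assoc _ _ _).symm

private lemma vmv_psd {n : Type*} [Fintype n] (v : n → ℂ) :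
    (Matrix.vecMulVec v (star v)).PosSemidef := by
  rw [vecMulVec_eq Unit, ← conjTranspose_replicateCol]
  exact posSemidef_self_mul_conjTranspose _

private lemma vmv_smul {n : Type*} [Fintype n] (c : ℂ) (v : n → ℂ) :
    Matrix.vecMulVec (c • v) (star (c • v)) = Complex.normSq c • Matrix.vecMulVec v (star v) := by
  ext i j
  simp [Matrix.vecMulVec_apply, Complex.real_smul, ← Complex.normSq_eq_conj_mul_self]
  ring_nf
  simp [Complex.normSq_eq_conj_mul_self]
  ring

private lemma vmv_trace {n : Type*} [Fintype n] (v : n → ℂ) :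
    (Matrix.vecMulVec v (star v)).trace = star v ⬝ᵥ v := by
  simp [Matrix.trace, Matrix.diag, Matrix.vecMulVec_apply, dotProduct, mul_comm]

private lemma ct_kron {l n p q : Type*} (A : Matrix l n ℂ) (C : Matrix p q ℂ) :
    (A ⊗ₖ C)ᴴ = Aᴴ ⊗ₖ Cᴴ := by
  ext ⟨i, a⟩ ⟨j, b⟩
  simp [conjTranspose_apply, star_mul', mul_comm]

private lemma sum_kron {l n p q s : Type*} [Fintype s] (A : s → Matrix l n ℂ) (C : Matrix p q ℂ) :
    ∑ j : s, (A j ⊗ₖ C) = (∑ j, A j) ⊗ₖ C := by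
  ext ⟨i, a⟩ ⟨j, b⟩
  simp [Matrix.sum_apply, Finset.sum_mul]

/-- Factorization bound for a local channel with invertible Kraus operators:
`E(($ ⊗ I)(|ψ⟩⟨ψ|)) ≤ (∑ j |det K j|^(2/d)) · E(|ψ⟩⟨ψ|)` for every pure state `ψ` of
`ℂ^d ⊗ ℂ^m`, where `E` is nonnegative, convex on density matrices, homogeneous of degree 1
on unnormalized positive rank-one matrices, and `SL(d,ℂ) ⊗ I`-invariant on pure states. -/
theorem channel_factorization_bound {d m s : ℕ} (hd : 1 ≤ d)
    (E : Matrix (Fin d × Fin m) (Fin d × Fin m) ℂ → ℝ)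
    (hEnn : ∀ ρ, 0 ≤ E ρ)
    (hconv : ∀ (r : ℕ) (p : Fin r → ℝ) (σ : Fin r → Matrix (Fin d × Fin m) (Fin d × Fin m) ℂ),
      (∀ i, 0 ≤ p i) → ∑ i, p i = 1 →
      (∀ i, (σ i).PosSemidef ∧ (σ i).trace = 1) →
      E (∑ i, p i • σ i) ≤ ∑ i, p i * E (σ i))
    (hhom : ∀ (r : ℝ), 0 ≤ r → ∀ ψ : Fin d × Fin m → ℂ,
      E (r • Matrix.vecMulVec ψ (star ψ)) = r * E (Matrix.vecMulVec ψ (star ψ)))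
    (hinv : ∀ g : Matrix (Fin d) (Fin d) ℂ, g.det = 1 → ∀ ψ : Fin d × Fin m → ℂ,
      E ((g ⊗ₖ (1 : Matrix (Fin m) (Fin m) ℂ)) * Matrix.vecMulVec ψ (star ψ) *
          (g ⊗ₖ (1 : Matrix (Fin m) (Fin m) ℂ))ᴴ)
        = E (Matrix.vecMulVec ψ (star ψ)))
    (K : Fin s → Matrix (Fin d) (Fin d) ℂ)
    (hKsum : ∑ j, (K j)ᴴ * K j = 1)
    (hKdet : ∀ j, (K j).det ≠ 0)
    (ψ : Fin d × Fin m → ℂ) (hψ : star ψ ⬝ᵥ ψ = 1) :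
    E (∑ j, (K j ⊗ₖ (1 : Matrix (Fin m) (Fin m) ℂ)) * Matrix.vecMulVec ψ (star ψ) *
        (K j ⊗ₖ (1 : Matrix (Fin m) (Fin m) ℂ))ᴴ)
      ≤ (∑ j, ‖(K j).det‖ ^ ((2 : ℝ) / d)) * E (Matrix.vecMulVec ψ (star ψ)) := by
  have hd0 : (d : ℕ) ≠ 0 := Nat.one_le_iff_ne_zero.mp hd
  set N : Fin s → Matrix (Fin d × Fin m) (Fin d × Fin m) ℂ :=
    fun j => K j ⊗ₖ (1 : Matrix (Fin m) (Fin m) ℂ) with hN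
  set v : Fin s → (Fin d × Fin m → ℂ) := fun j => N j *ᵥ ψ with hv
  set P := Matrix.vecMulVec ψ (star ψ) with hP
  -- each Kraus term is a rank-one matrix
  have hterm : ∀ j, N j * P * (N j)ᴴ = Matrix.vecMulVec (v j) (star (v j)) :=
    fun j => vmv_conj (N j) ψ
  -- key scaling identity
  have hE : ∀ j, E (Matrix.vecMulVec (v j) (star (v j)))
      = ‖(K j).det‖ ^ ((2 : ℝ) / d) * E P := by
    intro j
    obtain ⟨c, hc⟩ : ∃ c : ℂ, c ^ d = (K j).det :=
      ⟨(K j).det ^ ((d : ℂ)⁻¹), Complex.cpow_nat_inv_pow _ hd0⟩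
    have hc0 : c ≠ 0 := by
      intro h; apply hKdet j; rw [← hc, h, zero_pow hd0]
    set g : Matrix (Fin d) (Fin d) ℂ := c⁻¹ • K j with hg
    have hgdet : g.det = 1 := by
      rw [hg, Matrix.det_smul, Fintype.card_fin, ← hc, inv_pow, inv_mul_cancel₀]
      exact pow_ne_zero _ hc0
    have hKg : K j = c • g := by
      rw [hg, smul_smul, mul_inv_cancel₀ hc0, one_smul]
    have hNg : N j = c • (g ⊗ₖ (1 : Matrix (Fin m) (Fin m) ℂ)) := by
      simp only [hN]
      rw [hKg, smul_kronecker]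
    set w : Fin d × Fin m → ℂ := (g ⊗ₖ (1 : Matrix (Fin m) (Fin m) ℂ)) *ᵥ ψ with hw
    have hvj : v j = c • w := by
      simp only [hv]
      rw [hNg, hw, smul_mulVec]
    have habs : Complex.normSq c = ‖(K j).det‖ ^ ((2 : ℝ) / d) := by
      have h1 : ‖(K j).det‖ = ‖c‖ ^ (d : ℕ) := by
        rw [← hc, norm_pow]
      rw [h1, ← Real.rpow_natCast ‖c‖ d,
        ← Real.rpow_mul (norm_nonneg c)]
      have : (d : ℝ) * ((2 : ℝ) / d) = 2 := by
        field_simp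
      rw [this]
      rw [Real.rpow_two, Complex.sq_norm]
    calc E (Matrix.vecMulVec (v j) (star (v j)))
        = E (Complex.normSq c • Matrix.vecMulVec w (star w)) := by rw [hvj, vmv_smul]
      _ = Complex.normSq c * E (Matrix.vecMulVec w (star w)) :=
          hhom _ (Complex.normSq_nonneg c) w
      _ = Complex.normSq c * E P := by
          rw [hw, ← vmv_conj, hinv g hgdet]
      _ = ‖(K j).det‖ ^ ((2 : ℝ) / d) * E P := by rw [habs]
  -- weights
  set p : Fin s → ℝ := fun j => ∑ i, Complex.normSq (v j i) with hp
  have hpc : ∀ j, (p j : ℂ) = star (v j) ⬝ᵥ v j := by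
    intro j
    simp [hp, dotProduct, Complex.normSq_eq_conj_mul_self]
  have hpnn : ∀ j, 0 ≤ p j := fun j =>
    Finset.sum_nonneg fun i _ => Complex.normSq_nonneg _
  -- sum of weights is 1
  have hdot : ∀ j, star (v j) ⬝ᵥ v j = star ψ ⬝ᵥ ((N j)ᴴ * N j) *ᵥ ψ := by
    intro j
    rw [hv, Matrix.star_mulVec, Matrix.dotProduct_mulVec, Matrix.dotProduct_mulVec,
      Matrix.vecMul_vecMul]
  have hNsum : ∑ j, (N j)ᴴ * N j = 1 := by
    have : ∀ j, (N j)ᴴ * N j = ((K j)ᴴ * K j) ⊗ₖ (1 : Matrix (Fin m) (Fin m) ℂ) := by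
      intro j
      rw [hN, ct_kron, ← mul_kronecker_mul, conjTranspose_one, one_mul]
    simp_rw [this]
    rw [sum_kron, hKsum, one_kronecker_one]
  have hpsum : ∑ j, p j = 1 := by
    have h : ((∑ j, p j : ℝ) : ℂ) = 1 := by
      push_cast
      simp_rw [hpc, hdot]
      have h1 : (∑ j, (N j)ᴴ * N j) *ᵥ ψ = ∑ j, ((N j)ᴴ * N j) *ᵥ ψ := by
        ext i
        simp only [Matrix.mulVec, dotProduct, Matrix.sum_apply, Finset.sum_mul,
          Finset.sum_apply]
        exact Finset.sum_comm
      have h2 : star ψ ⬝ᵥ (∑ j, ((N j)ᴴ * N j) *ᵥ ψ) = ∑ j, star ψ ⬝ᵥ ((N j)ᴴ * N j) *ᵥ ψ := by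
        simp only [dotProduct, Finset.mul_sum, Finset.sum_apply]
        exact Finset.sum_comm
      rw [← h2, ← h1, hNsum, Matrix.one_mulVec, hψ]
    exact_mod_cast h
  -- weights are nonzero
  have hpne : ∀ j, p j ≠ 0 := by
    intro j hpj
    have hv0 : v j = 0 := by
      funext i
      have : ∀ i ∈ Finset.univ, Complex.normSq (v j i) = 0 := by
        intro i _
        have := (Finset.sum_eq_zero_iff_of_nonneg
          (fun i _ => Complex.normSq_nonneg (v j i))).mp hpj
        exact this i (Finset.mem_univ i)
      exact Complex.normSq_eq_zero.mp (this i (Finset.mem_univ i))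
    have hinvK : ((K j)⁻¹ ⊗ₖ (1 : Matrix (Fin m) (Fin m) ℂ)) * N j = 1 := by
      rw [hN, ← mul_kronecker_mul, Matrix.nonsing_inv_mul _
        (isUnit_iff_ne_zero.mpr (hKdet j)), one_mul, one_kronecker_one]
    have hψ0 : ψ = 0 := by
      have h1 : ((K j)⁻¹ ⊗ₖ (1 : Matrix (Fin m) (Fin m) ℂ)) *ᵥ (v j) = ψ := by
        rw [hv, Matrix.mulVec_mulVec, hinvK, Matrix.one_mulVec]
      rw [← h1, hv0, Matrix.mulVec_zero]
    rw [hψ0] at hψ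
    simp at hψ
  have hppos : ∀ j, 0 < p j := fun j => lt_of_le_of_ne (hpnn j) (Ne.symm (hpne j))
  -- normalized states
  set σ : Fin s → Matrix (Fin d × Fin m) (Fin d × Fin m) ℂ :=
    fun j => (p j)⁻¹ • Matrix.vecMulVec (v j) (star (v j)) with hσ
  have hσprop : ∀ j, (σ j).PosSemidef ∧ (σ j).trace = 1 := by
    intro j
    constructor
    · have h2 : Complex.normSq ((Real.sqrt ((p j)⁻¹) : ℝ) : ℂ) = (p j)⁻¹ := by
        rw [Complex.normSq_ofReal, Real.mul_self_sqrt (inv_nonneg.mpr (hpnn j))]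
      have h3 : σ j = Matrix.vecMulVec (((Real.sqrt ((p j)⁻¹) : ℝ) : ℂ) • v j)
          (star (((Real.sqrt ((p j)⁻¹) : ℝ) : ℂ) • v j)) := by
        rw [vmv_smul, h2]
      rw [h3]
      exact vmv_psd _
    · simp only [hσ]
      rw [Matrix.trace_smul, vmv_trace, ← hpc, Complex.real_smul, ← Complex.ofReal_mul,
        inv_mul_cancel₀ (hpne j), Complex.ofReal_one]
  -- rewrite the sum as a convex combination
  have hsum_eq : (∑ j, N j * P * (N j)ᴴ) = ∑ j, p j • σ j := by
    apply Finset.sum_congr rfl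
    intro j _
    rw [hterm]
    simp only [hσ]
    rw [smul_smul, mul_inv_cancel₀ (hpne j), one_smul]
  rw [hP] at hsum_eq ⊢
  rw [hsum_eq]
  calc E (∑ j, p j • σ j) ≤ ∑ j, p j * E (σ j) := hconv s p σ hpnn hpsum hσprop
    _ = ∑ j, ‖(K j).det‖ ^ ((2 : ℝ) / d) * E (Matrix.vecMulVec ψ (star ψ)) := by
        apply Finset.sum_congr rfl
        intro j _
        simp only [hσ]
        rw [hhom _ (inv_nonneg.mpr (hpnn j)), ← mul_assoc,
          mul_inv_cancel₀ (hpne j), one_mul, hE j, hP]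
    _ = (∑ j, ‖(K j).det‖ ^ ((2 : ℝ) / d)) * E (Matrix.vecMulVec ψ (star ψ)) := by
        rw [Finset.sum_mul]
end

section
/- Let ρ be a density matrix written as ρ = ∑_k p_k σ_k, where p_k > 0, ∑_k p_k = 1, and each σ_k is a density matrix. If the von Neumann entropy satisfies S(ρ) = ∑_k p_k S(σ_k), then σ_k = ρ for all k. -/
open Matrix ComplexOrder
open scoped Classical
open Finset

namespace VNAux

/-- Peierls inequality + equality case for a PSD matrix `A` in a unitary basis `U`. -/
theorem peierls {N : ℕ} (U A : Matrix (Fin N) (Fin N) ℂ)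
    (hU1 : U * star U = 1) (hU2 : star U * U = 1) (hA : A.PosSemidef) :
    (∀ i, 0 ≤ ((star U * A * U) i i).re) ∧
    (∑ j, Real.negMulLog (hA.1.eigenvalues j)
        ≤ ∑ i, Real.negMulLog (((star U * A * U) i i).re)) ∧
    (∑ i, Real.negMulLog (((star U * A * U) i i).re)
        = ∑ j, Real.negMulLog (hA.1.eigenvalues j) →
      star U * A * U = Matrix.diagonal (fun i => ((((star U * A * U) i i).re : ℝ) : ℂ))) := by
  set V : Matrix (Fin N) (Fin N) ℂ := (hA.1.eigenvectorUnitary : Matrix (Fin N) (Fin N) ℂ)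
  have hV1 : V * star V = 1 := Matrix.mem_unitaryGroup_iff.mp hA.1.eigenvectorUnitary.2
  have hV2 : star V * V = 1 := Matrix.mem_unitaryGroup_iff'.mp hA.1.eigenvectorUnitary.2
  set μ : Fin N → ℝ := hA.1.eigenvalues with hμdef
  set W : Matrix (Fin N) (Fin N) ℂ := star U * V with hWdef
  have hW1 : W * star W = 1 := by
    have : W * star W = star U * (V * star V) * U := by
      simp [hWdef, Matrix.star_mul, Matrix.mul_assoc]
    rw [this, hV1, Matrix.mul_one, hU2]
  have hW2 : star W * W = 1 := by
    have : star W * W = star V * (U * star U) * V := by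
      simp [hWdef, Matrix.star_mul, Matrix.mul_assoc]
    rw [this, hU1, Matrix.mul_one, hV2]
  -- entry formula
  have hentry : ∀ i i', (star U * A * U) i i'
      = ∑ j, (W i j * (starRingEnd ℂ) (W i' j)) * (μ j : ℂ) := by
    intro i i'
    have hsd : star U * A * U = W * Matrix.diagonal (fun j => (μ j : ℂ)) * star W := by
      conv_lhs => rw [hA.1.spectral_theorem]
      simp only [hWdef, Matrix.star_mul, star_star, Matrix.mul_assoc]
      rw [Unitary.conjStarAlgAut_apply]
      simp only [Matrix.mul_assoc]
      rfl
    rw [hsd]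
    rw [Matrix.mul_apply]
    congr 1; funext j
    rw [Matrix.mul_diagonal, Matrix.star_apply, Complex.star_def]
    ring
  set Q : Fin N → Fin N → ℝ := fun i j => Complex.normSq (W i j) with hQdef
  have hQnn : ∀ i j, 0 ≤ Q i j := fun i j => Complex.normSq_nonneg _
  set d : Fin N → ℝ := fun i => ((star U * A * U) i i).re with hddef
  have hd : ∀ i, d i = ∑ j, Q i j * μ j := by
    intro i
    rw [hddef]
    simp only [hentry i i, Complex.re_sum]
    congr 1; funext j
    rw [Complex.mul_conj, ← Complex.ofReal_mul, Complex.ofReal_re]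
  have hnorm : ∀ z : ℂ, (z * star z).re = Complex.normSq z := by
    intro z; rw [Complex.star_def, Complex.mul_conj, Complex.ofReal_re]
  have hrow : ∀ i, ∑ j, Q i j = 1 := by
    intro i
    have h := congrArg (fun M => (M i i).re) hW1
    simp only [Matrix.mul_apply, Matrix.star_apply, Matrix.one_apply_eq, Complex.one_re] at h
    rw [Complex.re_sum] at h
    rw [Finset.sum_congr rfl (fun j _ => hnorm (W i j))] at h
    simpa [hQdef] using h
  have hcol : ∀ j, ∑ i, Q i j = 1 := by
    intro j
    have h := congrArg (fun M => (M j j).re) hW2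
    simp only [Matrix.mul_apply, Matrix.star_apply, Matrix.one_apply_eq, Complex.one_re] at h
    rw [Complex.re_sum] at h
    have : ∀ i, (star (W i j) * W i j).re = Q i j := by
      intro i; rw [mul_comm]; rw [hnorm (W i j)]
    rw [Finset.sum_congr rfl (fun i _ => this i)] at h
    exact h
  have hμnn : ∀ j, 0 ≤ μ j := fun j => hA.eigenvalues_nonneg j
  have hdnn : ∀ i, 0 ≤ d i := by
    intro i; rw [hd i]
    exact Finset.sum_nonneg fun j _ => mul_nonneg (hQnn i j) (hμnn j)
  refine ⟨hdnn, ?_, ?_⟩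
  case _ =>
    -- the inequality
    calc ∑ j, Real.negMulLog (μ j)
        = ∑ j, (∑ i, Q i j) * Real.negMulLog (μ j) := by
          congr 1; funext j; rw [hcol j, one_mul]
      _ = ∑ i, ∑ j, Q i j * Real.negMulLog (μ j) := by
          rw [Finset.sum_comm]
          congr 1; funext j; rw [Finset.sum_mul]
      _ ≤ ∑ i, Real.negMulLog (d i) := by
          apply Finset.sum_le_sum
          intro i _
          have := Real.concaveOn_negMulLog.le_map_sum
            (t := Finset.univ) (w := Q i) (p := μ)
            (fun j _ => hQnn i j) (hrow i) (fun j _ => hμnn j)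
          simpa [smul_eq_mul, ← hd i] using this
  case _ =>
    intro heq
    -- per-i equality
    have hle : ∀ i, ∑ j, Q i j * Real.negMulLog (μ j) ≤ Real.negMulLog (d i) := by
      intro i
      have := Real.concaveOn_negMulLog.le_map_sum
        (t := Finset.univ) (w := Q i) (p := μ)
        (fun j _ => hQnn i j) (hrow i) (fun j _ => hμnn j)
      simpa [smul_eq_mul, ← hd i] using this
    have hsum2 : ∑ i, ∑ j, Q i j * Real.negMulLog (μ j) = ∑ j, Real.negMulLog (μ j) := by
      rw [Finset.sum_comm]
      congr 1; funext j
      rw [← Finset.sum_mul, hcol j, one_mul]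
    have hgap : ∑ i, (Real.negMulLog (d i) - ∑ j, Q i j * Real.negMulLog (μ j)) = 0 := by
      rw [Finset.sum_sub_distrib, hsum2, heq, sub_self]
    have hzero : ∀ i, Real.negMulLog (d i) = ∑ j, Q i j * Real.negMulLog (μ j) := by
      intro i
      have := (Finset.sum_eq_zero_iff_of_nonneg
        (fun i _ => sub_nonneg.mpr (hle i))).mp hgap i (Finset.mem_univ i)
      linarith [sub_eq_zero.mp this]
    have hkey : ∀ i j, Q i j ≠ 0 → μ j = d i := by
      intro i j hQ
      have hiff := Real.strictConcaveOn_negMulLog.map_sum_eq_iff'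
        (t := Finset.univ) (w := Q i) (p := μ)
        (fun j _ => hQnn i j) (hrow i) (fun j _ => hμnn j)
      have heq' : Real.negMulLog (∑ j, Q i j • μ j) = ∑ j, Q i j • Real.negMulLog (μ j) := by
        simpa [smul_eq_mul, ← hd i] using hzero i
      have := hiff.mp heq' j (Finset.mem_univ j) hQ
      simpa [smul_eq_mul, ← hd i] using this
    -- conclude matrix equality
    ext i i'
    rw [hentry i i', Matrix.diagonal_apply]
    have hterm : ∀ j, (W i j * (starRingEnd ℂ) (W i' j)) * (μ j : ℂ)
        = (W i j * (starRingEnd ℂ) (W i' j)) * (d i : ℂ) := by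
      intro j
      by_cases hw : W i j = 0
      · simp [hw]
      · have : Q i j ≠ 0 := by simpa [hQdef, Complex.normSq_eq_zero] using hw
        rw [hkey i j this]
    rw [Finset.sum_congr rfl (fun j _ => hterm j), ← Finset.sum_mul]
    have hWW : ∑ j, W i j * (starRingEnd ℂ) (W i' j) = if i = i' then 1 else 0 := by
      have h := congrArg (fun M => M i i') hW1
      simp only [Matrix.mul_apply, Matrix.star_apply, Complex.star_def] at h
      rw [h]
      simp [Matrix.one_apply]
    rw [hWW]
    by_cases h : i = i' <;> simp [h] <;> rfl

end VNAux


/-- The von Neumann entropy `S(ρ) = -∑ λᵢ log λᵢ` of a Hermitian matrix,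
computed from its eigenvalues. -/
noncomputable def vonNeumannEntropy {N : ℕ} (ρ : Matrix (Fin N) (Fin N) ℂ) : ℝ :=
  if h : ρ.IsHermitian then -∑ i, h.eigenvalues i * Real.log (h.eigenvalues i) else 0

lemma vne_eq {N : ℕ} (ρ : Matrix (Fin N) (Fin N) ℂ) (h : ρ.IsHermitian) :
    vonNeumannEntropy ρ = ∑ i, Real.negMulLog (h.eigenvalues i) := by
  rw [vonNeumannEntropy, dif_pos h, ← Finset.sum_neg_distrib]
  congr 1; funext i; rw [Real.negMulLog]; ring

/-- Equality case of strict concavity of von Neumann entropy: if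
`ρ = ∑ k, p k • σ k` with `p k > 0`, `∑ p = 1`, the `σ k` density matrices, and
`S(ρ) = ∑ k, p k * S(σ k)`, then `σ k = ρ` for all `k`. -/
theorem entropy_eq_avg_implies_all_eq {N s : ℕ}
    (ρ : Matrix (Fin N) (Fin N) ℂ) (hρ : ρ.PosSemidef) (hρtr : ρ.trace = 1)
    (p : Fin s → ℝ) (σ : Fin s → Matrix (Fin N) (Fin N) ℂ)
    (hp : ∀ k, 0 < p k) (hp1 : ∑ k, p k = 1)
    (hσ : ∀ k, (σ k).PosSemidef ∧ (σ k).trace = 1)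
    (hdecomp : ρ = ∑ k, p k • σ k)
    (hS : vonNeumannEntropy ρ = ∑ k, p k * vonNeumannEntropy (σ k)) :
    ∀ k, σ k = ρ := by
  set U : Matrix (Fin N) (Fin N) ℂ := (hρ.1.eigenvectorUnitary : Matrix (Fin N) (Fin N) ℂ)
    with hUdef
  have hU1 : U * star U = 1 := Matrix.mem_unitaryGroup_iff.mp hρ.1.eigenvectorUnitary.2
  have hU2 : star U * U = 1 := Matrix.mem_unitaryGroup_iff'.mp hρ.1.eigenvectorUnitary.2
  set lam : Fin N → ℝ := hρ.1.eigenvalues with hlamdef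
  have hρdiag : star U * ρ * U = Matrix.diagonal (fun i => ((lam i : ℝ) : ℂ)) := by
    have := hρ.1.conjStarAlgAut_star_eigenvectorUnitary
    rw [Unitary.conjStarAlgAut_apply, Unitary.coe_star, star_star] at this
    exact this
  set d : Fin s → Fin N → ℝ := fun k i => ((star U * σ k * U) i i).re with hddef
  have hP := fun k => VNAux.peierls U (σ k) hU1 hU2 (hσ k).1
  have hdnn : ∀ k i, 0 ≤ d k i := fun k i => (hP k).1 i
  -- lam i = ∑ k, p k * d k i
  have hdec2 : star U * ρ * U = ∑ k, p k • (star U * σ k * U) := by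
    rw [hdecomp, Matrix.mul_sum, Matrix.sum_mul]
    congr 1; funext k
    rw [Matrix.mul_smul, Matrix.smul_mul]
  have hlam : ∀ i, lam i = ∑ k, p k * d k i := by
    intro i
    have h1 := congrArg (fun M => (M i i).re) hρdiag
    have h2 := congrArg (fun M => (M i i).re) hdec2
    simp only [Matrix.diagonal_apply_eq, Complex.ofReal_re] at h1
    simp only [Matrix.sum_apply, Matrix.smul_apply, Complex.re_sum, Complex.smul_re,
      smul_eq_mul] at h2
    rw [← h1, h2]
  have hlamnn : ∀ i, 0 ≤ lam i := fun i =>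
    (hlam i) ▸ Finset.sum_nonneg fun k _ => mul_nonneg (hp k).le (hdnn k i)
  -- Jensen per i
  have hA : ∀ i, ∑ k, p k * Real.negMulLog (d k i) ≤ Real.negMulLog (lam i) := by
    intro i
    have := Real.concaveOn_negMulLog.le_map_sum
      (t := Finset.univ) (w := p) (p := fun k => d k i)
      (fun k _ => (hp k).le) hp1 (fun k _ => hdnn k i)
    simpa [smul_eq_mul, ← hlam i] using this
  -- rewrite hS
  set f := Real.negMulLog
  have hS' : ∑ i, f (lam i) = ∑ k, p k * ∑ j, f (((hσ k).1.1.eigenvalues) j) := by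
    rw [← vne_eq ρ hρ.1, hS]
    congr 1; funext k
    rw [vne_eq (σ k) (hσ k).1.1]
  -- gap decomposition
  have hgapA : 0 ≤ ∑ i, (f (lam i) - ∑ k, p k * f (d k i)) :=
    Finset.sum_nonneg fun i _ => sub_nonneg.mpr (hA i)
  have hgapB : ∀ k, 0 ≤ ∑ i, f (d k i) - ∑ j, f (((hσ k).1.1.eigenvalues) j) :=
    fun k => sub_nonneg.mpr (hP k).2.1
  have htot : ∑ i, (f (lam i) - ∑ k, p k * f (d k i))
      + ∑ k, p k * (∑ i, f (d k i) - ∑ j, f (((hσ k).1.1.eigenvalues) j)) = 0 := by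
    have hsw : ∑ i, ∑ k, p k * f (d k i) = ∑ k, p k * ∑ i, f (d k i) := by
      rw [Finset.sum_comm]
      congr 1; funext k; rw [Finset.mul_sum]
    rw [Finset.sum_sub_distrib]
    have : ∑ k, p k * (∑ i, f (d k i) - ∑ j, f (((hσ k).1.1.eigenvalues) j))
        = ∑ k, p k * ∑ i, f (d k i) - ∑ k, p k * ∑ j, f (((hσ k).1.1.eigenvalues) j) := by
      rw [← Finset.sum_sub_distrib]
      congr 1; funext k; ring
    rw [this, hsw, hS']
    ring
  have hgapB' : 0 ≤ ∑ k, p k * (∑ i, f (d k i) - ∑ j, f (((hσ k).1.1.eigenvalues) j)) :=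
    Finset.sum_nonneg fun k _ => mul_nonneg (hp k).le (hgapB k)
  have hA0 : ∑ i, (f (lam i) - ∑ k, p k * f (d k i)) = 0 := by linarith
  have hB0 : ∑ k, p k * (∑ i, f (d k i) - ∑ j, f (((hσ k).1.1.eigenvalues) j)) = 0 := by
    linarith
  -- each B k = 0, gives diagonality
  have hdiagσ : ∀ k, star U * σ k * U
      = Matrix.diagonal (fun i => ((d k i : ℝ) : ℂ)) := by
    intro k
    have h := (Finset.sum_eq_zero_iff_of_nonneg
      (fun k _ => mul_nonneg (hp k).le (hgapB k))).mp hB0 k (Finset.mem_univ k)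
    have hb : ∑ i, f (d k i) - ∑ j, f (((hσ k).1.1.eigenvalues) j) = 0 := by
      rcases mul_eq_zero.mp h with h' | h'
      · exact absurd h' (hp k).ne'
      · exact h'
    exact (hP k).2.2 (sub_eq_zero.mp hb)
  -- each A i = 0, gives d k i = lam i
  have hdval : ∀ k i, d k i = lam i := by
    intro k i
    have h := (Finset.sum_eq_zero_iff_of_nonneg
      (fun i _ => sub_nonneg.mpr (hA i))).mp hA0 i (Finset.mem_univ i)
    have heq : f (lam i) = ∑ k, p k * f (d k i) := by linarith [sub_eq_zero.mp h]
    have hiff := Real.strictConcaveOn_negMulLog.map_sum_eq_iff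
      (t := Finset.univ) (w := p) (p := fun k => d k i)
      (fun k _ => hp k) hp1 (fun k _ => hdnn k i)
    have heq' : f (∑ k, p k • d k i) = ∑ k, p k • f (d k i) := by
      simpa [smul_eq_mul, ← hlam i] using heq
    have := hiff.mp heq' k (Finset.mem_univ k)
    simpa [smul_eq_mul, ← hlam i] using this
  -- conclude
  intro k
  have hfun : (fun i => ((d k i : ℝ) : ℂ)) = fun i => ((lam i : ℝ) : ℂ) := by
    funext i; rw [hdval k i]
  have hfin : star U * σ k * U = star U * ρ * U := by
    rw [hdiagσ k, hfun, ← hρdiag]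
  have := congrArg (fun M => U * M * star U) hfin
  simpa only [Matrix.mul_assoc, ← Matrix.mul_assoc U (star U), hU1, Matrix.one_mul,
    Matrix.mul_one] using this
end

section
/- Let ρ be a density matrix and suppose ρ' = ∑_k p_k U_k ρ U_k† where p_k > 0, ∑p_k = 1, each U_k is unitary, and S(ρ') = S(ρ). Then U_k ρ U_k† = ρ' for every k; in particular ρ' is unitarily equivalent to ρ via a single unitary U_1. -/
open Matrix ComplexOrder
open scoped Classical

lemma entry_formula {N : ℕ} (P : Matrix (Fin N) (Fin N) ℂ) (d : Fin N → ℂ) (i i' : Fin N) :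
    (Pᴴ * Matrix.diagonal d * P) i i' = ∑ j, (starRingEnd ℂ) (P j i) * (d j * P j i') := by
  rw [Matrix.mul_assoc, Matrix.mul_apply]
  simp [Matrix.conjTranspose_apply, Matrix.diagonal_mul]

lemma unitary_col_sum {N : ℕ} {P : Matrix (Fin N) (Fin N) ℂ}
    (hP : P ∈ Matrix.unitaryGroup (Fin N) ℂ) (i : Fin N) :
    ∑ j, Complex.normSq (P j i) = 1 := by
  have h1 : Pᴴ * P = 1 := by
    rw [← Matrix.star_eq_conjTranspose]; exact (Matrix.mem_unitaryGroup_iff'.mp hP)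
  have h2 := congrArg (fun M => M i i) h1
  simp only [Matrix.mul_apply, Matrix.conjTranspose_apply, Matrix.one_apply_eq] at h2
  have : ∑ j, ((Complex.normSq (P j i) : ℂ)) = 1 := by
    rw [← h2]; congr 1; ext j
    rw [Complex.normSq_eq_conj_mul_self]; rfl
  exact_mod_cast this

lemma unitary_row_sum {N : ℕ} {P : Matrix (Fin N) (Fin N) ℂ}
    (hP : P ∈ Matrix.unitaryGroup (Fin N) ℂ) (j : Fin N) :
    ∑ i, Complex.normSq (P j i) = 1 := by
  have h1 : P * Pᴴ = 1 := by
    rw [← Matrix.star_eq_conjTranspose]; exact (Matrix.mem_unitaryGroup_iff.mp hP)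
  have h2 := congrArg (fun M => M j j) h1
  simp only [Matrix.mul_apply, Matrix.conjTranspose_apply, Matrix.one_apply_eq] at h2
  have : ∑ i, ((Complex.normSq (P j i) : ℂ)) = 1 := by
    rw [← h2]; congr 1; ext i
    rw [← Complex.mul_conj]; rfl
  exact_mod_cast this

/-- Peierls' inequality with equality case, for the diagonal of `Pᴴ D P`. -/
lemma peierls {N : ℕ} {P : Matrix (Fin N) (Fin N) ℂ}
    (hP : P ∈ Matrix.unitaryGroup (Fin N) ℂ) (μ : Fin N → ℝ) (hμ : ∀ j, 0 ≤ μ j) :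
    (∑ j, Real.negMulLog (μ j)) ≤
        ∑ i, Real.negMulLog (∑ j, Complex.normSq (P j i) * μ j) ∧
      ((∑ i, Real.negMulLog (∑ j, Complex.normSq (P j i) * μ j) = ∑ j, Real.negMulLog (μ j)) →
        Pᴴ * Matrix.diagonal (Complex.ofReal ∘ μ) * P =
          Matrix.diagonal (fun i => (Complex.ofReal (∑ j, Complex.normSq (P j i) * μ j)))) := by
  set c : Fin N → Fin N → ℝ := fun i j => Complex.normSq (P j i) with hc
  have hc0 : ∀ i j, (0:ℝ) ≤ c i j := fun i j => Complex.normSq_nonneg _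
  have hrow : ∀ i, ∑ j, c i j = 1 := fun i => unitary_col_sum hP i
  have hcol : ∀ j, ∑ i, c i j = 1 := fun j => unitary_row_sum hP j
  set x : Fin N → ℝ := fun i => ∑ j, c i j * μ j with hx
  have hmem : ∀ j, μ j ∈ Set.Ici (0:ℝ) := fun j => hμ j
  have hjen : ∀ i, ∑ j, c i j * Real.negMulLog (μ j) ≤ Real.negMulLog (x i) := by
    intro i
    have := Real.concaveOn_negMulLog.le_map_sum (t := Finset.univ)
      (w := c i) (p := μ) (fun j _ => hc0 i j) (hrow i) (fun j _ => hmem j)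
    simpa [smul_eq_mul] using this
  have hswap : ∑ i, ∑ j, c i j * Real.negMulLog (μ j) = ∑ j, Real.negMulLog (μ j) := by
    rw [Finset.sum_comm]
    simp [← Finset.sum_mul, hcol]
  constructor
  · calc ∑ j, Real.negMulLog (μ j) = ∑ i, ∑ j, c i j * Real.negMulLog (μ j) := hswap.symm
      _ ≤ ∑ i, Real.negMulLog (x i) := Finset.sum_le_sum (fun i _ => hjen i)
  · intro heq
    have hterm : ∀ i, ∑ j, c i j * Real.negMulLog (μ j) = Real.negMulLog (x i) := by
      have := (Finset.sum_eq_sum_iff_of_le (s := Finset.univ)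
        (f := fun i => ∑ j, c i j * Real.negMulLog (μ j))
        (g := fun i => Real.negMulLog (x i)) (fun i _ => hjen i)).mp
        (by rw [hswap, ← heq])
      exact fun i => this i (Finset.mem_univ i)
    have hkey : ∀ i j, c i j ≠ 0 → μ j = x i := by
      intro i j hcij
      have := (Real.strictConcaveOn_negMulLog.map_sum_eq_iff' (t := Finset.univ)
        (w := c i) (p := μ) (fun j _ => hc0 i j) (hrow i) (fun j _ => hmem j)).mp
        (by simpa [smul_eq_mul] using (hterm i).symm)
      simpa [smul_eq_mul] using this j (Finset.mem_univ j) hcij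
    ext i i'
    rw [entry_formula]
    have hPP : Pᴴ * P = 1 := by
      rw [← Matrix.star_eq_conjTranspose]; exact (Matrix.mem_unitaryGroup_iff'.mp hP)
    have hterm2 : ∀ j, (starRingEnd ℂ) (P j i) * ((Complex.ofReal ∘ μ) j * P j i') =
        (Complex.ofReal (x i)) * ((starRingEnd ℂ) (P j i) * P j i') := by
      intro j
      by_cases hz : P j i = 0
      · simp [hz]
      · have hcij : c i j ≠ 0 := by simpa [hc, Complex.normSq_eq_zero] using hz
        simp only [Function.comp_apply]
        rw [show μ j = x i from hkey i j hcij]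
        ring
    rw [Finset.sum_congr rfl (fun j _ => hterm2 j), ← Finset.mul_sum]
    have : ∑ j, (starRingEnd ℂ) (P j i) * P j i' = (Pᴴ * P) i i' := by
      simp [Matrix.mul_apply, Matrix.conjTranspose_apply]
    rw [this, hPP]
    by_cases hii : i = i'
    · subst hii
      rw [Matrix.one_apply_eq, mul_one, Matrix.diagonal_apply_eq]
    · simp [Matrix.one_apply_ne hii, Matrix.diagonal_apply_ne _ hii]

/-- If `ρ' = ∑ k, p k • U k ρ U kᴴ` is a mixture of unitary conjugates of `ρ`
(`p k > 0`, `∑ p = 1`) with `S(ρ') = S(ρ)`, then `U k ρ U kᴴ = ρ'` for every `k`;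
in particular `ρ'` is unitarily equivalent to `ρ` via the single unitary `U 1`. -/
theorem mixture_of_unitaries_entropy_eq {N s : ℕ} (hs : 0 < s)
    (ρ ρ' : Matrix (Fin N) (Fin N) ℂ)
    (hρ : ρ.PosSemidef) (hρtr : ρ.trace = 1)
    (p : Fin s → ℝ) (hp : ∀ k, 0 < p k) (hp1 : ∑ k, p k = 1)
    (U : Fin s → Matrix (Fin N) (Fin N) ℂ)
    (hU : ∀ k, U k ∈ Matrix.unitaryGroup (Fin N) ℂ)
    (hmix : ρ' = ∑ k, p k • (U k * ρ * (U k)ᴴ))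
    (hS : vonNeumannEntropy ρ' = vonNeumannEntropy ρ) :
    (∀ k, U k * ρ * (U k)ᴴ = ρ') ∧
      ρ' = U ⟨0, hs⟩ * ρ * (U ⟨0, hs⟩)ᴴ := by
  have hρH : ρ.IsHermitian := hρ.1
  have hσH : ∀ k, (U k * ρ * (U k)ᴴ).IsHermitian := by
    intro k
    show (U k * ρ * (U k)ᴴ)ᴴ = _
    rw [Matrix.conjTranspose_mul, Matrix.conjTranspose_mul,
      Matrix.conjTranspose_conjTranspose, hρH.eq, Matrix.mul_assoc]
  have hH' : ρ'.IsHermitian := by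
    rw [hmix]
    show _ᴴ = _
    rw [Matrix.conjTranspose_sum]
    refine Finset.sum_congr rfl fun k _ => ?_
    rw [Matrix.conjTranspose_smul, star_trivial, (hσH k).eq]
  -- eigen-data
  set Q : Matrix.unitaryGroup (Fin N) ℂ := hρH.eigenvectorUnitary with hQ
  set V : Matrix.unitaryGroup (Fin N) ℂ := hH'.eigenvectorUnitary with hV
  set μ : Fin N → ℝ := hρH.eigenvalues with hμ
  set lam : Fin N → ℝ := hH'.eigenvalues with hlam
  have hμ0 : ∀ j, 0 ≤ μ j := fun j => hρ.eigenvalues_nonneg j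
  -- the unitaries Pm k = Qᴴ Ukᴴ V
  set Pu : Fin s → Matrix.unitaryGroup (Fin N) ℂ :=
    fun k => star Q * star (⟨U k, hU k⟩ : Matrix.unitaryGroup (Fin N) ℂ) * V with hPu
  set Pm : Fin s → Matrix (Fin N) (Fin N) ℂ := fun k => (Pu k : Matrix (Fin N) (Fin N) ℂ)
    with hPm
  have hPmem : ∀ k, Pm k ∈ Matrix.unitaryGroup (Fin N) ℂ := fun k => (Pu k).2
  have hPmcoe : ∀ k, Pm k = (Q : Matrix (Fin N) (Fin N) ℂ)ᴴ * (U k)ᴴ *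
      (V : Matrix (Fin N) (Fin N) ℂ) := by
    intro k
    simp [hPm, hPu, Matrix.star_eq_conjTranspose]
  set x : Fin N → Fin s → ℝ := fun i k => ∑ j, Complex.normSq (Pm k j i) * μ j with hx
  have hx0 : ∀ i k, 0 ≤ x i k := fun i k =>
    Finset.sum_nonneg fun j _ => mul_nonneg (Complex.normSq_nonneg _) (hμ0 j)
  -- conjugation identity
  have hconj : ∀ k, (V : Matrix (Fin N) (Fin N) ℂ)ᴴ * (U k * ρ * (U k)ᴴ) *
      (V : Matrix (Fin N) (Fin N) ℂ) =
      (Pm k)ᴴ * Matrix.diagonal (Complex.ofReal ∘ μ) * (Pm k) := by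
    intro k
    rw [hPmcoe k]
    conv_lhs => rw [hρH.spectral_theorem]
    simp only [Unitary.conjStarAlgAut_apply, Matrix.star_eq_conjTranspose, Matrix.conjTranspose_mul,
      Matrix.conjTranspose_conjTranspose, Matrix.mul_assoc]
    rfl
  have hdiag' : (V : Matrix (Fin N) (Fin N) ℂ)ᴴ * ρ' * (V : Matrix (Fin N) (Fin N) ℂ) =
      Matrix.diagonal (Complex.ofReal ∘ lam) := by
    have := hH'.conjStarAlgAut_star_eigenvectorUnitary
    simp only [Unitary.conjStarAlgAut_apply, Unitary.coe_star, star_star] at this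
    rwa [Matrix.star_eq_conjTranspose] at this
  -- diagonal entries of conjugated matrices
  have hEntry : ∀ k i, ((Pm k)ᴴ * Matrix.diagonal (Complex.ofReal ∘ μ) * (Pm k)) i i =
      Complex.ofReal (x i k) := by
    intro k i
    rw [entry_formula]
    have hterm : ∀ j, (starRingEnd ℂ) (Pm k j i) * ((Complex.ofReal ∘ μ) j * Pm k j i) =
        Complex.ofReal (Complex.normSq (Pm k j i) * μ j) := by
      intro j
      simp only [Function.comp_apply, Complex.ofReal_mul]
      rw [Complex.normSq_eq_conj_mul_self]
      ring
    rw [Finset.sum_congr rfl fun j _ => hterm j, ← Complex.ofReal_sum]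
  -- lam i = ∑ k, p k * x i k
  have hlamx : ∀ i, lam i = ∑ k, p k * x i k := by
    intro i
    have hM : Matrix.diagonal (Complex.ofReal ∘ lam) =
        ∑ k, p k • ((Pm k)ᴴ * Matrix.diagonal (Complex.ofReal ∘ μ) * (Pm k)) := by
      rw [← hdiag', hmix, Matrix.mul_sum, Matrix.sum_mul]
      refine Finset.sum_congr rfl fun k _ => ?_
      rw [Matrix.mul_smul, Matrix.smul_mul, hconj k]
    have h2 := congrArg (fun M => M i i) hM
    simp only [Matrix.diagonal_apply_eq, Matrix.sum_apply, Matrix.smul_apply,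
      Function.comp_apply, hEntry] at h2
    have h3 : (Complex.ofReal (lam i)) = Complex.ofReal (∑ k, p k * x i k) := by
      rw [h2, Complex.ofReal_sum]
      refine Finset.sum_congr rfl fun k _ => ?_
      rw [Complex.ofReal_mul, Complex.real_smul]
    exact_mod_cast h3
  -- entropies as negMulLog sums
  have hSρ : vonNeumannEntropy ρ = ∑ j, Real.negMulLog (μ j) := by
    simp only [vonNeumannEntropy, dif_pos hρH, Real.negMulLog, neg_mul,
      Finset.sum_neg_distrib, hμ]
  have hSρ' : vonNeumannEntropy ρ' = ∑ i, Real.negMulLog (lam i) := by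
    simp only [vonNeumannEntropy, dif_pos hH', Real.negMulLog, neg_mul,
      Finset.sum_neg_distrib, hlam]
  -- Jensen per i
  have hA : ∀ i, ∑ k, p k * Real.negMulLog (x i k) ≤ Real.negMulLog (lam i) := by
    intro i
    rw [hlamx i]
    have := Real.concaveOn_negMulLog.le_map_sum (t := Finset.univ) (w := p)
      (p := fun k => x i k) (fun k _ => (hp k).le) hp1 (fun k _ => hx0 i k)
    simpa [smul_eq_mul] using this
  -- Peierls per k
  have hT : ∀ k, ∑ j, Real.negMulLog (μ j) ≤ ∑ i, Real.negMulLog (x i k) :=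
    fun k => (peierls (hPmem k) μ hμ0).1
  -- the sandwich
  have hswap : ∑ i, ∑ k, p k * Real.negMulLog (x i k) =
      ∑ k, p k * ∑ i, Real.negMulLog (x i k) := by
    rw [Finset.sum_comm]
    exact Finset.sum_congr rfl fun k _ => (Finset.mul_sum _ _ _).symm
  have hSmu : ∑ k, p k * ∑ j, Real.negMulLog (μ j) = ∑ j, Real.negMulLog (μ j) := by
    rw [← Finset.sum_mul, hp1, one_mul]
  have h1 : ∑ j, Real.negMulLog (μ j) ≤ ∑ k, p k * ∑ i, Real.negMulLog (x i k) := by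
    rw [← hSmu]
    exact Finset.sum_le_sum fun k _ => mul_le_mul_of_nonneg_left (hT k) (hp k).le
  have h2 : ∑ k, p k * ∑ i, Real.negMulLog (x i k) ≤ ∑ i, Real.negMulLog (lam i) := by
    rw [← hswap]
    exact Finset.sum_le_sum fun i _ => hA i
  have htot : ∑ i, Real.negMulLog (lam i) = ∑ j, Real.negMulLog (μ j) := by
    rw [← hSρ, ← hSρ', hS]
  have hmid : ∑ k, p k * ∑ i, Real.negMulLog (x i k) = ∑ j, Real.negMulLog (μ j) :=
    le_antisymm (htot ▸ h2) h1
  -- per-k equality : ∑ i, negMulLog (x i k) = ∑ j, negMulLog (μ j)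
  have hTk : ∀ k, ∑ i, Real.negMulLog (x i k) = ∑ j, Real.negMulLog (μ j) := by
    have := (Finset.sum_eq_sum_iff_of_le (s := Finset.univ)
      (f := fun k => p k * ∑ j, Real.negMulLog (μ j))
      (g := fun k => p k * ∑ i, Real.negMulLog (x i k))
      (fun k _ => mul_le_mul_of_nonneg_left (hT k) (hp k).le)).mp
      (by rw [hmid, hSmu])
    intro k
    have hk := this k (Finset.mem_univ k)
    exact mul_left_cancel₀ (hp k).ne' hk.symm
  -- per-i equality
  have hAi : ∀ i, Real.negMulLog (lam i) = ∑ k, p k * Real.negMulLog (x i k) := by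
    have := (Finset.sum_eq_sum_iff_of_le (s := Finset.univ)
      (f := fun i => ∑ k, p k * Real.negMulLog (x i k))
      (g := fun i => Real.negMulLog (lam i))
      (fun i _ => hA i)).mp (by rw [hswap, hmid, htot])
    intro i
    exact (this i (Finset.mem_univ i)).symm
  -- Jensen equality : x i k = lam i
  have hxlam : ∀ i k, x i k = lam i := by
    intro i k
    have := (Real.strictConcaveOn_negMulLog.map_sum_eq_iff (t := Finset.univ)
      (w := p) (p := fun k => x i k) (fun k _ => hp k) hp1 (fun k _ => hx0 i k)).mp
      (by
        have := hAi i
        rw [hlamx i] at this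
        simpa [smul_eq_mul] using this)
    have hk := this k (Finset.mem_univ k)
    rw [hk, hlamx i]
    simp [smul_eq_mul]
  -- Peierls equality : diagonalization of conjugated ρ
  have hPeq : ∀ k, (Pm k)ᴴ * Matrix.diagonal (Complex.ofReal ∘ μ) * (Pm k) =
      Matrix.diagonal (Complex.ofReal ∘ lam) := by
    intro k
    have := (peierls (hPmem k) μ hμ0).2 (hTk k)
    have hfun : (fun i => Complex.ofReal (∑ j, Complex.normSq (Pm k j i) * μ j)) =
        Complex.ofReal ∘ lam := by
      funext i
      exact congrArg Complex.ofReal (hxlam i k)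
    rw [this, hfun]
  -- conclude
  have hVV : (V : Matrix (Fin N) (Fin N) ℂ) * (V : Matrix (Fin N) (Fin N) ℂ)ᴴ = 1 := by
    rw [← Matrix.star_eq_conjTranspose]
    exact Matrix.mem_unitaryGroup_iff.mp V.2
  have cancel : ∀ M : Matrix (Fin N) (Fin N) ℂ,
      (V : Matrix (Fin N) (Fin N) ℂ) * ((V : Matrix (Fin N) (Fin N) ℂ)ᴴ * M *
        (V : Matrix (Fin N) (Fin N) ℂ)) * (V : Matrix (Fin N) (Fin N) ℂ)ᴴ = M := by
    intro M
    have h1 : (V : Matrix (Fin N) (Fin N) ℂ) * ((V : Matrix (Fin N) (Fin N) ℂ)ᴴ * M *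
        (V : Matrix (Fin N) (Fin N) ℂ)) * (V : Matrix (Fin N) (Fin N) ℂ)ᴴ =
        ((V : Matrix (Fin N) (Fin N) ℂ) * (V : Matrix (Fin N) (Fin N) ℂ)ᴴ) * M *
        ((V : Matrix (Fin N) (Fin N) ℂ) * (V : Matrix (Fin N) (Fin N) ℂ)ᴴ) := by
      simp only [Matrix.mul_assoc]
    rw [h1, hVV, Matrix.one_mul, Matrix.mul_one]
  have hmain : ∀ k, U k * ρ * (U k)ᴴ = ρ' := by
    intro k
    have hside : (V : Matrix (Fin N) (Fin N) ℂ)ᴴ * (U k * ρ * (U k)ᴴ) *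
        (V : Matrix (Fin N) (Fin N) ℂ) =
        (V : Matrix (Fin N) (Fin N) ℂ)ᴴ * ρ' * (V : Matrix (Fin N) (Fin N) ℂ) := by
      rw [hconj k, hPeq k, hdiag']
    rw [← cancel (U k * ρ * (U k)ᴴ), hside, cancel ρ']
  exact ⟨hmain, (hmain ⟨0, hs⟩).symm⟩
end
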